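/- Let the n-dimensional base manifold (M, g) of a static perfect fluid spacetime M̃ = M ×_f ℝ admit an almost gradient Ricci soliton with potential function equal to the warping function f: Hess(f) + S + λ g = 0. Then M is Einstein; precisely, S(X₁, X₂) = (1/(f+1)) { (r − 2ρ)/(2(n−1)) · f − λ } g(X₁, X₂) for all vector fields X₁, X₂. -/

import Mathlib

/-- If the `n`-dimensional base `(M,g)` of a static perfect fluid spacetime
admits an almost gradient Ricci soliton with potential equal to the warping function `f`
(`Hess f + S + λ g = 0`), then `M` is Einstein:
`S = (1/(f+1)) { (r - 2ρ)/(2(n-1)) f - λ } g`. -/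
theorem stmt_6 {M V : Type*} (n : ℕ) (hn : 2 ≤ n)
    (g S Hf : V → V → M → ℝ)
    (f Deltaf r rho lam : M → ℝ)
    (hf : ∀ p, 0 < f p)
    -- SPF equations
    (hSPF1 : ∀ X Y p, f p * (S X Y p - r p / (n : ℝ) * g X Y p)
      = Hf X Y p - Deltaf p / (n : ℝ) * g X Y p)
    (hSPF2 : ∀ p, Deltaf p
      = (((n : ℝ) - 2) / (2 * ((n : ℝ) - 1)) * r p + (n : ℝ) / ((n : ℝ) - 1) * rho p) * f p)
    -- almost gradient Ricci soliton with potential f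
    (hsol : ∀ X Y p, Hf X Y p + S X Y p + lam p * g X Y p = 0) :
    ∀ X Y p, S X Y p
      = (1 / (f p + 1)) * ((r p - 2 * rho p) / (2 * ((n : ℝ) - 1)) * f p - lam p) * g X Y p := by
  intro X Y p
  have hn2 : (2:ℝ) ≤ (n:ℝ) := by exact_mod_cast hn
  have hN : (n:ℝ) ≠ 0 := by linarith
  have h1 : (n:ℝ) - 1 ≠ 0 := by intro h; linarith [sub_eq_zero.mp h]
  have hfp : f p + 1 ≠ 0 := by have := hf p; linarith
  have e1 := hSPF1 X Y p
  have e2 := hSPF2 p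
  have e3 := hsol X Y p
  field_simp
  field_simp at e1 e2
  have key : ((n:ℝ)*((n:ℝ)-1)) * (S X Y p * ((f p + 1) * (2 * ((n:ℝ) - 1))))
      = ((n:ℝ)*((n:ℝ)-1)) * (((r p - 2 * rho p) * f p - 2 * ((n:ℝ) - 1) * lam p) * g X Y p) := by
    linear_combination (2*((n:ℝ)-1)^2) * e1 + (2*(n:ℝ)*((n:ℝ)-1)^2) * e3 - ((n:ℝ)-1) * g X Y p * e2
  exact mul_left_cancel₀ (mul_ne_zero hN h1) (by linear_combination key)
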